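/- Let ⟨x_n⟩ be a sequence in N and A an IP* set in (N,+). Then there exists a sum subsystem ⟨y_n⟩ of ⟨x_n⟩ such that FS(⟨y_n⟩) ∪ FP(⟨y_n⟩) ⊆ A. -/

import Mathlib

attribute [local instance] Ultrafilter.addSemigroup

/-- `FS x` : all finite sums of the sequence `x` over nonempty finite index sets. -/
def FS (x : ℕ → ℕ) : Set ℕ :=
  {s | ∃ F : Finset ℕ, F.Nonempty ∧ s = ∑ n ∈ F, x n}

/-- `FP x` : all finite products of the sequence `x` over nonempty finite index sets. -/
def FP (x : ℕ → ℕ) : Set ℕ :=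
  {s | ∃ F : Finset ℕ, F.Nonempty ∧ s = ∏ n ∈ F, x n}

/-- `y` is a sum subsystem of `x`. -/
def IsSumSubsystem (y x : ℕ → ℕ) : Prop :=
  ∃ H : ℕ → Finset ℕ, (∀ n, (H n).Nonempty) ∧
    (∀ n, ∀ i ∈ H n, ∀ j ∈ H (n + 1), i < j) ∧
    ∀ n, y n = ∑ t ∈ H n, x t

open Filter

theorem IPStar.mem_add_iff' {U V : Ultrafilter ℕ} {s : Set ℕ} :
    s ∈ U + V ↔ {a | {b | a + b ∈ s} ∈ V} ∈ U := Iff.rfl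

theorem IPStar.map_mul_idem (U : Ultrafilter ℕ) (hU : U + U = U) (q : ℕ) :
    U.map (q * ·) + U.map (q * ·) = U.map (q * ·) := by
  have key : ∀ s : Set ℕ, s ∈ U.map (q * ·) + U.map (q * ·) ↔ s ∈ U.map (q * ·) := by
    intro s
    have h1 : (s ∈ U.map (q * ·) + U.map (q * ·)) ↔
        ({a | {b | q * a + q * b ∈ s} ∈ U} ∈ U) := Iff.rfl
    have h2 : s ∈ U.map (q * ·) ↔ ((q * ·) ⁻¹' s) ∈ U := Iff.rfl
    have h3 : ((q * ·) ⁻¹' s) ∈ U + U ↔ {a | {b | q * (a + b) ∈ s} ∈ U} ∈ U := Iff.rfl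
    have h4 : ((q * ·) ⁻¹' s) ∈ U ↔ {a | {b | q * (a + b) ∈ s} ∈ U} ∈ U := by
      conv_lhs => rw [← hU]
      exact h3
    rw [h1, h2, h4]
    simp only [mul_add]
  exact Ultrafilter.coe_inj.mp (Filter.ext fun s => by
    rw [Ultrafilter.mem_coe, Ultrafilter.mem_coe]; exact key s)

theorem IPStar.exists_idem_tails (a : Stream' ℕ) :
    ∃ U : Ultrafilter ℕ, U + U = U ∧ ∀ n, {m | m ∈ Hindman.FS (Stream'.drop n a)} ∈ U := by
  let S : Set (Ultrafilter ℕ) := ⋂ n, { U | ∀ᶠ m in U, m ∈ Hindman.FS (a.drop n) }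
  have h := exists_idempotent_in_compact_add_subsemigroup ?_ S ?_ ?_ ?_
  · rcases h with ⟨U, hU, U_idem⟩
    refine ⟨U, U_idem, fun n => Set.mem_iInter.mp hU n⟩
  · exact Ultrafilter.continuous_add_left
  · apply IsCompact.nonempty_iInter_of_sequence_nonempty_isCompact_isClosed
    · intro n U hU
      filter_upwards [hU]
      rw [← Stream'.drop_drop, ← Stream'.tail_eq_drop]
      exact Hindman.FS.tail' _
    · intro n
      exact ⟨pure _, mem_pure.mpr <| Hindman.FS.head _⟩
    · exact (ultrafilter_isClosed_basic _).isCompact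
    · intro n
      apply ultrafilter_isClosed_basic
  · exact IsClosed.isCompact (isClosed_iInter fun i => ultrafilter_isClosed_basic _)
  · intro U hU V hV
    rw [Set.mem_iInter] at *
    intro n
    rw [Set.mem_setOf_eq, Ultrafilter.eventually_add]
    filter_upwards [hU n] with m hm
    obtain ⟨n', hn⟩ := Hindman.FS.add hm
    filter_upwards [hV (n + n')] with m' hm'
    apply hn
    simpa only [Stream'.drop_drop] using hm'

theorem IPStar.fs_finset : ∀ (a : Stream' ℕ) (s : ℕ), s ∈ Hindman.FS a →
    ∃ F : Finset ℕ, F.Nonempty ∧ s = ∑ i ∈ F, a.get i := by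
  intro a s h
  induction h with
  | head' a => exact ⟨{0}, ⟨0, Finset.mem_singleton_self 0⟩, by simp [Stream'.head]⟩
  | tail' a m h ih =>
    obtain ⟨F, hF, hsum⟩ := ih
    refine ⟨F.image (· + 1), hF.image _, ?_⟩
    rw [Finset.sum_image (by intro x _ y _ h; simp only at h; omega)]
    exact hsum
  | cons' a m h ih =>
    obtain ⟨F, hF, hsum⟩ := ih
    refine ⟨insert 0 (F.image (· + 1)), Finset.insert_nonempty _ _, ?_⟩
    rw [Finset.sum_insert (by simp), Finset.sum_image (by intro x _ y _ h; simp only at h; omega)]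
    exact congrArg (a.get 0 + ·) hsum

theorem IPStar.fs_drop_finset (a : Stream' ℕ) (n : ℕ) (s : ℕ)
    (h : s ∈ Hindman.FS (Stream'.drop n a)) :
    ∃ F : Finset ℕ, F.Nonempty ∧ (∀ i ∈ F, n ≤ i) ∧ s = ∑ i ∈ F, a.get i := by
  obtain ⟨F, hF, hsum⟩ := IPStar.fs_finset _ _ h
  refine ⟨F.image (· + n), hF.image _, by simp, ?_⟩
  rw [Finset.sum_image (by intro x _ y _ h; simp only at h; omega)]
  simpa only [Stream'.get_drop, add_comm] using hsum

/-- If `A` is an IP* set in `(ℕ,+)`, i.e. a member of every idempotent ultrafilter,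
then for every sequence `x` there is a sum subsystem `y` of `x` with
`FS(y) ∪ FP(y) ⊆ A`. -/
theorem ipstar_sum_subsystem (x : ℕ → ℕ) (A : Set ℕ)
    (hA : ∀ p : Ultrafilter ℕ, p + p = p → A ∈ p) :
    ∃ y : ℕ → ℕ, IsSumSubsystem y x ∧ FS y ∪ FP y ⊆ A := by
  classical
  obtain ⟨U, hUidem, hUtail⟩ := IPStar.exists_idem_tails x
  set Astar : Set ℕ := {a | a ∈ A ∧ {b | a + b ∈ A} ∈ U} with hAstarDef
  have hAU : A ∈ U := hA U hUidem
  have hAstarU : Astar ∈ U := by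
    have h2 : {a | {b | a + b ∈ A} ∈ U} ∈ U := by
      have h := hAU; rw [← hUidem] at h
      exact IPStar.mem_add_iff'.mp h
    exact inter_mem hAU h2
  have star_shift : ∀ a ∈ Astar, {b | a + b ∈ Astar} ∈ U := by
    intro a ha
    obtain ⟨haA, hB⟩ := ha
    have h2 : {b | {c | b + c ∈ {d | a + d ∈ A}} ∈ U} ∈ U := by
      have h : {d | a + d ∈ A} ∈ U + U := by rw [hUidem]; exact hB
      exact IPStar.mem_add_iff'.mp h
    have h2' : {b | {c | (a + b) + c ∈ A} ∈ U} ∈ U := by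
      simpa only [Set.mem_setOf_eq, ← add_assoc] using h2
    exact inter_mem hB h2'
  have div_mem : ∀ q : ℕ, {b | q * b ∈ A} ∈ U := fun q =>
    Ultrafilter.mem_map.mp (hA (U.map (q * ·)) (IPStar.map_mul_idem U hUidem q))
  -- key inductive step
  have key : ∀ (b : ℕ) (S P : Finset ℕ), ∃ H : Finset ℕ,
      (↑S ⊆ Astar → ↑P ⊆ A →
        (H.Nonempty ∧ (∀ i ∈ H, b ≤ i) ∧
          (↑(S ∪ {∑ i ∈ H, x i} ∪ S.image (· + ∑ i ∈ H, x i)) : Set ℕ) ⊆ Astar ∧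
          (↑(P ∪ {∑ i ∈ H, x i} ∪ P.image (· * ∑ i ∈ H, x i)) : Set ℕ) ⊆ A)) := by
    intro b S P
    by_cases hinv : ↑S ⊆ Astar ∧ ↑P ⊆ A
    · obtain ⟨hS, hP⟩ := hinv
      have hB : (Astar ∩ (⋂ s ∈ S, {m | s + m ∈ Astar}) ∩ (⋂ q ∈ P, {m | q * m ∈ A})
          ∩ {m | m ∈ Hindman.FS (Stream'.drop b x)}) ∈ U := by
        refine inter_mem (inter_mem (inter_mem hAstarU ?_) ?_) (hUtail b)
        · exact (Filter.biInter_finset_mem S).mpr fun s hs => star_shift s (hS hs)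
        · exact (Filter.biInter_finset_mem P).mpr fun q _ => div_mem q
      obtain ⟨y0, hy0⟩ := Ultrafilter.nonempty_of_mem hB
      obtain ⟨⟨⟨hyst, hysum⟩, hyprod⟩, hyfs⟩ := hy0
      obtain ⟨H, hHne, hHge, hHsum⟩ := IPStar.fs_drop_finset x b y0 hyfs
      replace hHsum : y0 = ∑ i ∈ H, x i := hHsum
      subst hHsum
      simp only [Set.mem_iInter₂] at hysum hyprod
      refine ⟨H, fun _ _ => ⟨hHne, hHge, ?_, ?_⟩⟩
      · intro m hm
        simp only [Finset.coe_union, Finset.coe_image, Finset.coe_singleton, Set.mem_union,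
          Set.mem_image, Set.mem_singleton_iff, Finset.mem_coe] at hm
        rcases hm with (hm | rfl) | ⟨s, hsS, rfl⟩
        · exact hS hm
        · exact hyst
        · exact hysum s hsS
      · intro m hm
        simp only [Finset.coe_union, Finset.coe_image, Finset.coe_singleton, Set.mem_union,
          Set.mem_image, Set.mem_singleton_iff, Finset.mem_coe] at hm
        rcases hm with (hm | rfl) | ⟨q, hqP, rfl⟩
        · exact hP hm
        · exact hyst.1
        · exact hyprod q hqP
    · exact ⟨∅, fun h1 h2 => absurd ⟨h1, h2⟩ hinv⟩
  choose Hf hf using key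
  let step : ℕ × Finset ℕ × Finset ℕ → ℕ × Finset ℕ × Finset ℕ := fun t =>
    ((Hf t.1 t.2.1 t.2.2).sup id + 1,
      t.2.1 ∪ {∑ i ∈ Hf t.1 t.2.1 t.2.2, x i}
        ∪ t.2.1.image (· + ∑ i ∈ Hf t.1 t.2.1 t.2.2, x i),
      t.2.2 ∪ {∑ i ∈ Hf t.1 t.2.1 t.2.2, x i}
        ∪ t.2.2.image (· * ∑ i ∈ Hf t.1 t.2.1 t.2.2, x i))
  let g : ℕ → ℕ × Finset ℕ × Finset ℕ := fun n => Nat.rec (0, ∅, ∅) (fun _ t => step t) n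
  let H : ℕ → Finset ℕ := fun n => Hf (g n).1 (g n).2.1 (g n).2.2
  let y : ℕ → ℕ := fun n => ∑ i ∈ H n, x i
  have inv : ∀ n, (↑(g n).2.1 : Set ℕ) ⊆ Astar ∧ (↑(g n).2.2 : Set ℕ) ⊆ A := by
    intro n
    induction n with
    | zero =>
      constructor
      · intro m hm
        rw [show (g 0).2.1 = ∅ from rfl] at hm
        simp at hm
      · intro m hm
        rw [show (g 0).2.2 = ∅ from rfl] at hm
        simp at hm
    | succ n ih =>
      have h := hf (g n).1 (g n).2.1 (g n).2.2 ih.1 ih.2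
      exact ⟨h.2.2.1, h.2.2.2⟩
  have spec := fun n => hf (g n).1 (g n).2.1 (g n).2.2 (inv n).1 (inv n).2
  have horder : ∀ n, ∀ i ∈ H n, ∀ j ∈ H (n + 1), i < j := by
    intro n i hi j hj
    have h1 : (g (n + 1)).1 = (H n).sup id + 1 := rfl
    have h2 := (spec (n + 1)).2.1 j hj
    rw [h1] at h2
    have h3 : i ≤ (H n).sup id := Finset.le_sup (f := id) hi
    omega
  have hSstep : ∀ n, (g (n + 1)).2.1 = (g n).2.1 ∪ {y n} ∪ (g n).2.1.image (· + y n) := fun n => rfl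
  have hPstep : ∀ n, (g (n + 1)).2.2 = (g n).2.2 ∪ {y n} ∪ (g n).2.2.image (· * y n) := fun n => rfl
  have sums : ∀ n (F : Finset ℕ), F.Nonempty → (∀ i ∈ F, i < n) →
      (∑ i ∈ F, y i) ∈ (g n).2.1 := by
    intro n
    induction n with
    | zero => intro F hF hlt; obtain ⟨i, hi⟩ := hF; exact absurd (hlt i hi) (by omega)
    | succ n ih =>
      intro F hF hlt
      rw [hSstep n]
      by_cases hn : n ∈ F
      · by_cases he : (F.erase n).Nonempty
        · rw [← Finset.sum_erase_add F y hn]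
          refine Finset.mem_union_right _ ?_
          refine Finset.mem_image_of_mem _ ?_
          exact ih (F.erase n) he (fun i hi => by
            have h1 := hlt i (Finset.mem_of_mem_erase hi)
            have h2 := Finset.ne_of_mem_erase hi
            omega)
        · have hFe : F = {n} := by
            apply Finset.eq_singleton_iff_unique_mem.mpr
            refine ⟨hn, fun i hi => ?_⟩
            by_contra hne
            exact he ⟨i, Finset.mem_erase.mpr ⟨hne, hi⟩⟩
          rw [hFe, Finset.sum_singleton]
          exact Finset.mem_union_left _ (Finset.mem_union_right _ (Finset.mem_singleton_self _))
      · refine Finset.mem_union_left _ (Finset.mem_union_left _ ?_)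
        exact ih F hF (fun i hi => by
          have h1 := hlt i hi
          have h2 : i ≠ n := fun h => hn (h ▸ hi)
          omega)
  have prods : ∀ n (F : Finset ℕ), F.Nonempty → (∀ i ∈ F, i < n) →
      (∏ i ∈ F, y i) ∈ (g n).2.2 := by
    intro n
    induction n with
    | zero => intro F hF hlt; obtain ⟨i, hi⟩ := hF; exact absurd (hlt i hi) (by omega)
    | succ n ih =>
      intro F hF hlt
      rw [hPstep n]
      by_cases hn : n ∈ F
      · by_cases he : (F.erase n).Nonempty
        · rw [← Finset.prod_erase_mul F y hn]
          refine Finset.mem_union_right _ ?_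
          refine Finset.mem_image_of_mem _ ?_
          exact ih (F.erase n) he (fun i hi => by
            have h1 := hlt i (Finset.mem_of_mem_erase hi)
            have h2 := Finset.ne_of_mem_erase hi
            omega)
        · have hFe : F = {n} := by
            apply Finset.eq_singleton_iff_unique_mem.mpr
            refine ⟨hn, fun i hi => ?_⟩
            by_contra hne
            exact he ⟨i, Finset.mem_erase.mpr ⟨hne, hi⟩⟩
          rw [hFe, Finset.prod_singleton]
          exact Finset.mem_union_left _ (Finset.mem_union_right _ (Finset.mem_singleton_self _))
      · refine Finset.mem_union_left _ (Finset.mem_union_left _ ?_)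
        exact ih F hF (fun i hi => by
          have h1 := hlt i hi
          have h2 : i ≠ n := fun h => hn (h ▸ hi)
          omega)
  refine ⟨y, ⟨H, fun n => (spec n).1, horder, fun n => rfl⟩, ?_⟩
  rintro s (hs | hs)
  · obtain ⟨F, hF, rfl⟩ := hs
    have hm := sums (F.sup id + 1) F hF
      (fun i hi => Nat.lt_succ_of_le (Finset.le_sup (f := id) hi))
    exact ((inv (F.sup id + 1)).1 (Finset.mem_coe.mpr hm)).1
  · obtain ⟨F, hF, rfl⟩ := hs
    have hm := prods (F.sup id + 1) F hF
      (fun i hi => Nat.lt_succ_of_le (Finset.le_sup (f := id) hi))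
    exact (inv (F.sup id + 1)).2 (Finset.mem_coe.mpr hm)
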